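/- Let T be a rooted binary tree shape with n leaves having an internal vertex z with children a and a leaf l, where a is internal with child subtrees T_1 and T_2 of leaf counts n_1 ≥ n_2 with n_1 + n_2 ≥ 3. Let T' be the shape obtained from T by replacing the subtree below z with the shape whose root has children T_1 and an internal vertex b, where b has children T_2 and the leaf l. Then c_5(T) ≥ c_5(T'), and if n ≥ 7 then c_5(T) > c_5(T'); moreover, for the subtrees below z, c_5(T_z) − c_5(T'_z) = C(n_1, 3)·n_2. -/

import Mathlib

/-! ## Rooted binary trees, shapes, restriction, distributions -/

/-- Rooted binary trees with leaves labelled by `α`: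
a tree is either a single (labelled) leaf, or an (ordered) pair of subtrees. -/
inductive RBT (α : Type) : Type
  | leaf (a : α) : RBT α
  | node (l r : RBT α) : RBT α
  deriving DecidableEq

namespace RBT

variable {α β : Type}

/-- The multiset of leaf labels of a tree. -/
def leaves : RBT α → Multiset α
  | leaf a => {a}
  | node l r => leaves l + leaves r

/-- The number of leaves of a tree. -/
def numLeaves : RBT α → ℕ
  | leaf _ => 1
  | node l r => numLeaves l + numLeaves r

/-- Relabel the leaves of a tree. -/
def map (f : α → β) : RBT α → RBT β
  | leaf a => leaf (f a)
  | node l r => node (map f l) (map f r)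

end RBT

/-- Unlabelled rooted binary trees. -/
abbrev UTree : Type := RBT Unit

namespace RBT

variable {α : Type}

/-- Forget the leaf labels of a tree. -/
def forget (t : RBT α) : UTree := t.map fun _ => ()

/-- Structural comparison on unlabelled trees (a leaf is smaller than an internal
node; internal nodes are compared lexicographically on their children). -/
def cmpT : UTree → UTree → Ordering
  | leaf _, leaf _ => .eq
  | leaf _, node _ _ => .lt
  | node _ _, leaf _ => .gt
  | node a b, node c d => (cmpT a c).then (cmpT b d)

/-- Canonical form (AHU) of an unlabelled rooted binary tree: recursively put the
two children of every internal vertex in nondecreasing `cmpT` order.  Two rooted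
binary trees are isomorphic (equal as *shapes*) iff their canonical forms are
equal, so canonical forms faithfully encode the set `RB_U` of tree shapes. -/
def canon : UTree → UTree
  | leaf a => leaf a
  | node l r =>
      let l' := canon l
      let r' := canon r
      if cmpT l' r' = Ordering.gt then node r' l' else node l' r'

/-- The shape (leaf-relabelling isomorphism class, encoded as a canonical form)
of a labelled tree. -/
def shape (t : RBT α) : UTree := canon (forget t)

/-- Restriction `T|_A` of a tree to the leaves with labels in `A`: delete all
leaves outside `A` and suppress the resulting degree-two vertices (the result is
rooted at the most recent common ancestor of `A`); `none` if no leaf survives. -/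
def restrict [DecidableEq α] (A : Finset α) : RBT α → Option (RBT α)
  | leaf a => if a ∈ A then some (leaf a) else none
  | node l r =>
      match restrict A l, restrict A r with
      | some l', some r' => some (node l' r')
      | some l', none => some l'
      | none, some r' => some r'
      | none, none => none

end RBT

/-- `T ∈ RB_L(n)`: the leaves of `T` are labelled bijectively by `[n] = {0, …, n-1}`. -/
def IsPhylo (n : ℕ) (T : RBT ℕ) : Prop := T.leaves = Multiset.range n

instance (n : ℕ) (T : RBT ℕ) : Decidable (IsPhylo n T) :=
  inferInstanceAs (Decidable (T.leaves = Multiset.range n))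

/-- `p` is a probability distribution on `RB_L(n)` (viewed as a vector with
coordinates indexed by labelled trees): nonnegative, supported on `RB_L(n)`,
with total mass one. -/
structure IsDist (n : ℕ) (p : RBT ℕ → ℝ) : Prop where
  nonneg : ∀ T, 0 ≤ p T
  supp : ∀ T, ¬ IsPhylo n T → p T = 0
  total : HasSum p 1

/-- `p` is exchangeable: relabelling the leaves by any permutation of `[n]`
does not change probabilities. -/
def Exchangeable (n : ℕ) (p : RBT ℕ → ℝ) : Prop :=
  ∀ σ : Equiv.Perm ℕ, (∀ i, i < n → σ i < n) → ∀ T : RBT ℕ, p (T.map ⇑σ) = p T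

/-- `EX_n`: the exchangeable probability distributions on `RB_L(n)`. -/
def EX (n : ℕ) : Set (RBT ℕ → ℝ) := {p | IsDist n p ∧ Exchangeable n p}

/-- `O(u)`: the labelled trees in `RB_L(n)` whose shape is (the shape of) `u`. -/
def orbitSet (n : ℕ) (u : UTree) : Set (RBT ℕ) :=
  {T | IsPhylo n T ∧ T.shape = RBT.canon u}

/-- `p_u`: the exchangeable distribution that is uniform on `O(u)` and zero
elsewhere. -/
noncomputable def pShape (n : ℕ) (u : UTree) : RBT ℕ → ℝ := fun T =>
  if IsPhylo n T ∧ T.shape = RBT.canon u then ((orbitSet n u).ncard : ℝ)⁻¹ else 0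

/-- Marginalization map `π_n` from distributions on `RB_L(m)` to distributions on
`RB_L(n)`: `π_n(p)(T) = Σ_{S ∈ RB_L(m), S|_{[n]} = T} p(S)`. -/
noncomputable def marg (m n : ℕ) (p : RBT ℕ → ℝ) : RBT ℕ → ℝ := fun T =>
  ∑' S : RBT ℕ, if IsPhylo m S ∧ RBT.restrict (Finset.range n) S = some T then p S else 0

/-- `EX_n^m = π_n(EX_m)`: the `m`-sampling consistent exchangeable distributions
on `RB_L(n)`. -/
def EXP (n m : ℕ) : Set (RBT ℕ → ℝ) := marg m n '' EX m

/-- `EX_n^∞ = ⋂_{m ≥ n} EX_n^m`: the exchangeable and (infinitely) sampling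
consistent distributions on `RB_L(n)`. -/
def EXinf (n : ℕ) : Set (RBT ℕ → ℝ) := ⋂ (m : ℕ) (_ : n ≤ m), EXP n m

/-- The shapes with `n` leaves (`RB_U(n)`), encoded as canonical forms. -/
def ShapeOn (n : ℕ) : Type := {u : UTree // RBT.canon u = u ∧ u.numLeaves = n}

/-! ## Particular shapes -/

/-- The comb (caterpillar) shape `Comb_k` with `k` leaves. -/
def combU : ℕ → UTree
  | 0 => .leaf ()
  | 1 => .leaf ()
  | n + 2 => .node (.leaf ()) (combU (n + 1))

/-- `comb(t, k)`: the comb with `k` leaves in which one of the two deepest leaves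
is replaced by the tree `t`. -/
def combWith (t : UTree) : ℕ → UTree
  | 0 => t
  | 1 => t
  | n + 2 => .node (.leaf ()) (combWith t (n + 1))

/-- The balanced shape `Bal_4` on four leaves (two cherries joined at the root). -/
def bal4U : UTree := .node (.node (.leaf ()) (.leaf ())) (.node (.leaf ()) (.leaf ()))

/-- The giraffe shape `Gir_5 = comb(Bal_4, 2)` on five leaves. -/
def gir5U : UTree := combWith bal4U 2

/-- The balanced shape `Bal_5` on five leaves (a cherry and a three-leaf comb
joined at the root). -/
def bal5U : UTree := .node (.node (.leaf ()) (.leaf ())) (combU 3)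

/-- `bicomb(a, b)`: the shape obtained by joining `Comb_a` and `Comb_b` at a new
root. -/
def bicombU (a b : ℕ) : UTree := .node (combU a) (combU b)

/-- The complete balanced binary tree with `2^k` leaves. -/
def fullBal : ℕ → UTree
  | 0 => .leaf ()
  | k + 1 => .node (fullBal k) (fullBal k)

/-- A shape is maximally balanced if at every internal vertex the numbers of
leaves of the two child subtrees differ by at most one. -/
def IsMaxBalanced : UTree → Prop
  | .leaf _ => True
  | .node l r =>
      (l.numLeaves ≤ r.numLeaves + 1 ∧ r.numLeaves ≤ l.numLeaves + 1)
        ∧ IsMaxBalanced l ∧ IsMaxBalanced r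

/-! ## Counting restriction subtrees -/

/-- Label the leaves of an unlabelled tree `0, 1, 2, …` from left to right
(auxiliary function threading the next fresh label). -/
def labelFrom : UTree → ℕ → RBT ℕ × ℕ
  | .leaf _, k => (.leaf k, k + 1)
  | .node l r, k =>
      let pl := labelFrom l k
      let pr := labelFrom r pl.2
      (.node pl.1 pr.1, pr.2)

/-- A labelled representative of an unlabelled tree, with distinct leaf labels. -/
def label (u : UTree) : RBT ℕ := (labelFrom u 0).1

/-- The number of `k`-element subsets `A` of the leaves of (a labelled
representative of) `u` such that the restriction tree `u|_A` has shape `s`. -/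
def countRestr (u : UTree) (s : UTree) (k : ℕ) : ℕ :=
  (((label u).leaves.toFinset.powersetCard k).filter
    (fun A => Option.map RBT.shape (RBT.restrict A (label u)) = some (RBT.canon s))).card

/-- `c_5(u)`: the number of `5`-element subsets of the leaves of `u` whose
restriction tree is the five-leaf comb. -/
def c5 (u : UTree) : ℕ := countRestr u (combU 5) 5

/-! ## One-hole contexts (for subtree-swapping statements) -/

/-- One-hole contexts for unlabelled rooted binary trees: a position in a tree at
which a subtree may be substituted. -/
inductive Ctx : Type
  | hole : Ctx
  | nodeL (c : Ctx) (r : UTree) : Ctx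
  | nodeR (l : UTree) (c : Ctx) : Ctx

/-- Fill the hole of a context with a tree. -/
def Ctx.fill : Ctx → UTree → UTree
  | .hole, t => t
  | .nodeL c r, t => .node (c.fill t) r
  | .nodeR l c, t => .node l (c.fill t)

/-! ## The multinomial model -/

/-- A multiset of edges of a tree shape, encoded as the shape with a
multiplicity attached to every vertex (each vertex stands for the edge directly
above it; the root vertex stands for the root edge of the extended tree). -/
inductive MTree : Type
  | leaf (k : ℕ) : MTree
  | node (k : ℕ) (l r : MTree) : MTree
  deriving DecidableEq

namespace MTree

/-- The underlying tree shape of a multiplicity assignment. -/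
def strip : MTree → UTree
  | leaf _ => .leaf ()
  | node _ l r => .node (strip l) (strip r)

/-- The total number of chosen edges (with multiplicity). -/
def total : MTree → ℕ
  | leaf k => k
  | node k l r => k + total l + total r

/-- The product of the factorials of the multiplicities (denominator of the
multinomial coefficient). -/
def factProd : MTree → ℕ
  | leaf k => k.factorial
  | node k l r => k.factorial * factProd l * factProd r

/-- The product `Π_e t_e^{m_A(e)}` of edge-parameter powers, for the parameter
vector assigning `c` to every pendant edge and `0` to every other edge. -/
noncomputable def wProd (c : ℝ) : MTree → ℝ
  | leaf k => c ^ k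
  | node k l r => (0 : ℝ) ^ k * wProd c l * wProd c r

/-- Join two optional trees at a new root. -/
def mergeO : Option UTree → Option UTree → Option UTree
  | some l, some r => some (.node l r)
  | some l, none => some l
  | none, some r => some r
  | none, none => none

/-- Attach `k` new leaves along the edge above an (optional) already-built tree. -/
def attach : ℕ → Option UTree → Option UTree
  | 0, s => s
  | k + 1, s =>
      match attach k s with
      | none => some (.leaf ())
      | some t => some (.node (.leaf ()) t)

/-- `T_A`: attach one new leaf to an edge for each of its occurrences in the
multiset `A`, and restrict the resulting tree to the new leaves. -/
def build : MTree → Option UTree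
  | leaf k => attach k none
  | node k l r => attach k (mergeO (build l) (build r))

end MTree

/-- The probability, under the multinomial model on the shape `T` (with edge
parameter `c` on every pendant edge and `0` on every other edge), that a random
multiset `A` of `n` edges yields a tree `T_A` of shape `s`:
`d(s) = Σ_{A, T_A = s} C(n; m_A) Π_e t_e^{m_A(e)}`. -/
noncomputable def multinomDist (T : UTree) (c : ℝ) (n : ℕ) (s : UTree) : ℝ :=
  ∑' a : MTree,
    if a.strip = T ∧ a.total = n ∧ Option.map RBT.canon a.build = some (RBT.canon s) then
      ((n.factorial : ℝ) / (a.factProd : ℝ)) * MTree.wProd c a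
    else 0


/-! ### Auxiliary lemmas for Statement 14 -/

section Aux

open RBT

namespace RBT

variable {α β : Type}

theorem numLeaves_pos (t : RBT α) : 0 < t.numLeaves := by
  induction t with
  | leaf a => exact Nat.one_pos
  | node l r ihl ihr => simp only [numLeaves]; omega

theorem card_leaves (t : RBT α) : Multiset.card t.leaves = t.numLeaves := by
  induction t with
  | leaf a => rfl
  | node l r ihl ihr => simp [leaves, numLeaves, ihl, ihr]

theorem leaves_map (f : α → β) (t : RBT α) : (t.map f).leaves = t.leaves.map f := by
  induction t with
  | leaf a => rfl
  | node l r ihl ihr => simp [map, leaves, ihl, ihr]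

theorem map_map (f : α → β) {γ : Type} (g : β → γ) (t : RBT α) :
    (t.map f).map g = t.map (g ∘ f) := by
  induction t with
  | leaf a => rfl
  | node l r ihl ihr => simp [map, ihl, ihr]

theorem numLeaves_map (f : α → β) (t : RBT α) : (t.map f).numLeaves = t.numLeaves := by
  induction t with
  | leaf a => rfl
  | node l r ihl ihr => simp [map, numLeaves, ihl, ihr]

theorem forget_map (f : α → β) (t : RBT α) : (t.map f).forget = t.forget := by
  unfold forget; rw [map_map]

theorem numLeaves_canon (u : UTree) : (canon u).numLeaves = u.numLeaves := by
  induction u with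
  | leaf a => rfl
  | node l r ihl ihr =>
    simp only [canon]
    split <;> simp only [numLeaves, ihl, ihr] <;> omega

theorem numLeaves_forget (t : RBT α) : t.forget.numLeaves = t.numLeaves :=
  numLeaves_map _ t

theorem numLeaves_shape (t : RBT α) : (shape t).numLeaves = t.numLeaves := by
  unfold shape; rw [numLeaves_canon, numLeaves_forget]

theorem shape_map (f : α → β) (t : RBT α) : (t.map f).shape = t.shape := by
  unfold shape; rw [forget_map]

theorem cmpT_leaf_ne_gt (u : UTree) : cmpT (.leaf ()) u ≠ .gt := by
  cases u <;> simp [cmpT]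

theorem cmpT_node_leaf (a b : UTree) : cmpT (.node a b) (.leaf ()) = .gt := rfl

theorem canon_comb : ∀ n, canon (combU n) = combU n
  | 0 => rfl
  | 1 => rfl
  | (n+2) => by
    show canon (.node (.leaf ()) (combU (n+1))) = _
    simp only [canon, canon_comb (n+1)]
    rw [if_neg (cmpT_leaf_ne_gt _)]
    rfl

theorem shape_node (a b : RBT α) :
    shape (node a b) = if cmpT (shape a) (shape b) = .gt
      then .node (shape b) (shape a) else .node (shape a) (shape b) := rfl

theorem shape_leaf (a : α) : shape (leaf a) = .leaf () := rfl

theorem shape_eq_leaf_iff {t : RBT α} : shape t = .leaf () ↔ t.numLeaves = 1 := by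
  constructor
  · intro h
    have h2 := numLeaves_shape t
    rw [h] at h2
    exact h2.symm ▸ rfl
  · intro h
    cases t with
    | leaf a => rfl
    | node l r =>
      have := numLeaves_pos l; have := numLeaves_pos r
      simp only [numLeaves] at h; omega

theorem shape_eq_comb2 {t : RBT α} (h : t.numLeaves = 2) : shape t = combU 2 := by
  cases t with
  | leaf a => simp [numLeaves] at h
  | node l r =>
    have hl0 := numLeaves_pos l; have hr0 := numLeaves_pos r
    simp only [numLeaves] at h
    have hl : l.numLeaves = 1 := by omega
    have hr : r.numLeaves = 1 := by omega
    rw [shape_node, shape_eq_leaf_iff.2 hl, shape_eq_leaf_iff.2 hr]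
    simp [cmpT, combU]

theorem shape_eq_comb3 {t : RBT α} (h : t.numLeaves = 3) : shape t = combU 3 := by
  cases t with
  | leaf a => simp [numLeaves] at h
  | node l r =>
    have hl0 := numLeaves_pos l; have hr0 := numLeaves_pos r
    simp only [numLeaves] at h
    have hcase : (l.numLeaves = 1 ∧ r.numLeaves = 2) ∨ (l.numLeaves = 2 ∧ r.numLeaves = 1) := by
      omega
    rcases hcase with ⟨h1, h2⟩ | ⟨h1, h2⟩
    · rw [shape_node, shape_eq_leaf_iff.2 h1, shape_eq_comb2 h2]
      simp [cmpT, combU]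
    · rw [shape_node, shape_eq_comb2 h1, shape_eq_leaf_iff.2 h2]
      simp [cmpT, combU]

theorem shape_node_eq_iff {a b : RBT α} {x y : UTree} :
    shape (node a b) = .node (.leaf ()) (.node x y) ↔
      (shape a = .leaf () ∧ shape b = .node x y) ∨
        (shape a = .node x y ∧ shape b = .leaf ()) := by
  rw [shape_node]
  constructor
  · intro h
    split at h
    · injection h with h1 h2
      exact Or.inr ⟨h2, h1⟩
    · injection h with h1 h2
      exact Or.inl ⟨h1, h2⟩
  · rintro (⟨h1, h2⟩ | ⟨h1, h2⟩) <;> rw [h1, h2] <;> simp [cmpT]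

end RBT

end Aux
section Aux2

namespace RBT

variable {α β : Type} [DecidableEq α] [DecidableEq β]

theorem restrict_eq_none_iff {A : Finset α} {t : RBT α} :
    restrict A t = none ↔ ∀ a ∈ t.leaves, a ∉ A := by
  induction t with
  | leaf a => by_cases h : a ∈ A <;> simp [restrict, leaves, h]
  | node l r ihl ihr =>
    constructor
    · intro h a ha hA
      simp only [restrict] at h
      cases hl : restrict A l <;> cases hr : restrict A r <;> rw [hl, hr] at h <;>
        try simp at h
      simp only [leaves, Multiset.mem_add] at ha
      rcases ha with ha | ha
      · exact (ihl.1 hl) a ha hA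
      · exact (ihr.1 hr) a ha hA
    · intro h
      have h1 : restrict A l = none := ihl.2 (fun a ha => h a (by simp [leaves, ha]))
      have h2 : restrict A r = none := ihr.2 (fun a ha => h a (by simp [leaves, ha]))
      simp only [restrict, h1, h2]

theorem leaves_of_restrict {A : Finset α} {t t' : RBT α}
    (h : restrict A t = some t') : t'.leaves = t.leaves.filter (· ∈ A) := by
  induction t generalizing t' with
  | leaf a =>
    by_cases ha : a ∈ A <;> simp only [restrict, ha, if_true, if_false] at h
    · cases h
      simp only [leaves]
      rw [Multiset.filter_eq_self.2 (by intro b hb; rw [Multiset.mem_singleton] at hb; subst hb; exact ha)]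
    · cases h
  | node l r ihl ihr =>
    simp only [restrict] at h
    cases hl : restrict A l <;> cases hr : restrict A r <;> rw [hl, hr] at h
    · cases h
    · cases h
      have h0 : Multiset.filter (· ∈ A) l.leaves = 0 :=
        Multiset.filter_eq_nil.2 (restrict_eq_none_iff.1 hl)
      simp [leaves, Multiset.filter_add, h0, ihr hr]
    · cases h
      have h0 : Multiset.filter (· ∈ A) r.leaves = 0 :=
        Multiset.filter_eq_nil.2 (restrict_eq_none_iff.1 hr)
      simp [leaves, Multiset.filter_add, h0, ihl hl]
    · cases h
      simp [leaves, Multiset.filter_add, ihl hl, ihr hr]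

theorem restrict_congr {A B : Finset α} {t : RBT α}
    (h : ∀ a ∈ t.leaves, (a ∈ A ↔ a ∈ B)) : restrict A t = restrict B t := by
  induction t with
  | leaf a =>
    have ha := h a (by simp [leaves])
    by_cases hA : a ∈ A
    · rw [restrict, restrict, if_pos hA, if_pos (ha.1 hA)]
    · rw [restrict, restrict, if_neg hA, if_neg (fun hB => hA (ha.2 hB))]
  | node l r ihl ihr =>
    have h1 := ihl (fun a ha => h a (by simp [leaves, ha]))
    have h2 := ihr (fun a ha => h a (by simp [leaves, ha]))
    simp only [restrict, h1, h2]

theorem restrict_map {f : α → β} (hf : Function.Injective f) (A : Finset α) (t : RBT α) :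
    restrict (A.image f) (t.map f) = Option.map (map f) (restrict A t) := by
  induction t with
  | leaf a =>
    by_cases h : a ∈ A
    · simp [map, restrict, Finset.mem_image_of_mem f h, h]
    · have hfa : f a ∉ A.image f := by
        simp only [Finset.mem_image, not_exists, not_and]
        intro x hx hfx
        exact h ((hf hfx) ▸ hx)
      simp [map, restrict, hfa, h]
  | node l r ihl ihr =>
    simp only [map, restrict, ihl, ihr]
    cases restrict A l <;> cases restrict A r <;> simp [map]

end RBT

theorem labelFrom_snd (u : UTree) : ∀ k, (labelFrom u k).2 = k + u.numLeaves := by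
  induction u with
  | leaf a => intro k; simp [labelFrom, RBT.numLeaves]
  | node l r ihl ihr =>
    intro k
    simp only [labelFrom, RBT.numLeaves, ihl, ihr]
    omega

theorem labelFrom_fst_shift (u : UTree) : ∀ j k,
    (labelFrom u (j + k)).1 = ((labelFrom u j).1).map (· + k) := by
  induction u with
  | leaf a => intro j k; rfl
  | node l r ihl ihr =>
    intro j k
    simp only [labelFrom, RBT.map, labelFrom_snd]
    rw [show j + k + l.numLeaves = (j + l.numLeaves) + k by omega, ihl, ihr]

theorem leaves_labelFrom (u : UTree) : ∀ k,
    ((labelFrom u k).1).leaves = (Multiset.range u.numLeaves).map (· + k) := by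
  induction u with
  | leaf a => intro k; simp [labelFrom, RBT.leaves, RBT.numLeaves, Multiset.range_succ]
  | node l r ihl ihr =>
    intro k
    simp only [labelFrom, RBT.leaves, RBT.numLeaves, labelFrom_snd, ihl, ihr]
    rw [Multiset.range_add, Multiset.map_add, Multiset.map_map]
    congr 1
    apply Multiset.map_congr rfl
    intro x _
    simp [Function.comp]
    omega

theorem leaves_label (u : UTree) : (label u).leaves = Multiset.range u.numLeaves := by
  rw [label, leaves_labelFrom]
  simp

theorem nodup_leaves_label (u : UTree) : (label u).leaves.Nodup := by
  rw [leaves_label]; exact Multiset.nodup_range _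

theorem numLeaves_label (u : UTree) : (label u).numLeaves = u.numLeaves := by
  rw [← RBT.card_leaves, leaves_label, Multiset.card_range]

theorem label_node (l r : UTree) :
    label (RBT.node l r) = RBT.node (label l) ((label r).map (· + l.numLeaves)) := by
  show (labelFrom (RBT.node l r) 0).1 = _
  simp only [labelFrom, labelFrom_snd, zero_add]
  have hsh := labelFrom_fst_shift r 0 l.numLeaves
  rw [zero_add] at hsh
  rw [hsh]
  rfl

end Aux2
section Aux3

open RBT Finset

/-- Count over a labelled tree. -/
def lcnt (t : RBT ℕ) (s : UTree) (k : ℕ) : ℕ :=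
  ((t.leaves.toFinset.powersetCard k).filter
    (fun A => Option.map RBT.shape (RBT.restrict A t) = some s)).card

theorem countRestr_eq_lcnt (u s : UTree) (k : ℕ) :
    countRestr u s k = lcnt (label u) (RBT.canon s) k := rfl

theorem restrict_some_of_subset {t : RBT ℕ} (hn : t.leaves.Nodup) {A : Finset ℕ}
    (hA : A ⊆ t.leaves.toFinset) (hne : A.Nonempty) :
    ∃ t', RBT.restrict A t = some t' ∧ t'.numLeaves = A.card := by
  cases h : RBT.restrict A t with
  | none =>
    obtain ⟨a, ha⟩ := hne
    exact absurd ha ((RBT.restrict_eq_none_iff.1 h) a (Multiset.mem_toFinset.1 (hA ha)))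
  | some t' =>
    refine ⟨t', rfl, ?_⟩
    have hl := RBT.leaves_of_restrict h
    have hval : t'.leaves = A.val := by
      refine ((Multiset.Nodup.ext ?_ A.nodup).2 ?_)
      · rw [hl]; exact hn.filter _
      · intro a
        rw [hl, Multiset.mem_filter]
        constructor
        · rintro ⟨_, h2⟩; exact h2
        · intro h2
          exact ⟨Multiset.mem_toFinset.1 (hA h2), h2⟩
    rw [← RBT.card_leaves, hval]
    rfl

theorem lcnt_comb3 {t : RBT ℕ} (hn : t.leaves.Nodup) :
    lcnt t (combU 3) 3 = t.numLeaves.choose 3 := by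
  rw [lcnt, Finset.filter_true_of_mem, Finset.card_powersetCard,
    Multiset.toFinset_card_of_nodup hn, RBT.card_leaves]
  intro A hA
  rw [Finset.mem_powersetCard] at hA
  obtain ⟨t', h1, h2⟩ := restrict_some_of_subset hn hA.1
    (by rw [← Finset.card_pos, hA.2]; norm_num)
  rw [h1]
  simp only [Option.map_some]
  rw [RBT.shape_eq_comb3 (by rw [h2, hA.2])]

theorem lcnt_cond_map {f : ℕ → ℕ} (hf : Function.Injective f) (A : Finset ℕ) (t : RBT ℕ)
    (s : UTree) :
    (Option.map RBT.shape (RBT.restrict (A.image f) (t.map f)) = some s) ↔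
      (Option.map RBT.shape (RBT.restrict A t) = some s) := by
  rw [RBT.restrict_map hf]
  cases RBT.restrict A t <;> simp [RBT.shape_map]

theorem lcnt_map {f : ℕ → ℕ} (hf : Function.Injective f) (t : RBT ℕ) (s : UTree) (k : ℕ) :
    lcnt (t.map f) s k = lcnt t s k := by
  unfold lcnt
  rw [RBT.leaves_map, Multiset.toFinset_map]
  symm
  apply Finset.card_nbij (i := fun A => A.image f)
  · intro A hA
    simp only [Finset.mem_coe, Finset.mem_filter, Finset.mem_powersetCard] at hA ⊢
    obtain ⟨⟨hsub, hcard⟩, hP⟩ := hA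
    exact ⟨⟨Finset.image_subset_image hsub,
      by rw [Finset.card_image_of_injective _ hf, hcard]⟩, (lcnt_cond_map hf A t s).2 hP⟩
  · intro A _ B _ hAB
    exact Finset.image_injective hf hAB
  · intro B hB
    simp only [Finset.mem_coe, Finset.mem_filter, Finset.mem_powersetCard] at hB
    obtain ⟨⟨hsub, hcard⟩, hP⟩ := hB
    obtain ⟨A, hAsub, rfl⟩ := Finset.subset_image_iff.1 hsub
    refine ⟨A, ?_, rfl⟩
    simp only [Finset.mem_coe, Finset.mem_filter, Finset.mem_powersetCard]
    exact ⟨⟨hAsub, by rwa [Finset.card_image_of_injective _ hf] at hcard⟩,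
      (lcnt_cond_map hf A t s).1 hP⟩

theorem countRestr_leaf {s : UTree} {k : ℕ} (hk : 2 ≤ k) : countRestr (.leaf ()) s k = 0 := by
  rw [countRestr]
  have h1 : ((label (RBT.leaf ())).leaves.toFinset.powersetCard k) = ∅ := by
    rw [Finset.powersetCard_eq_empty]
    rw [Multiset.toFinset_card_of_nodup (nodup_leaves_label _), RBT.card_leaves,
      numLeaves_label]
    show 1 < k
    omega
  rw [h1]
  simp

end Aux3
section Aux4

open RBT Finset

theorem card_filter_prod {α β : Type*} (s : Finset α) (t : Finset β)
    (p : α → Prop) (q : β → Prop) [DecidablePred p] [DecidablePred q] :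
    ((s ×ˢ t).filter (fun x => p x.1 ∧ q x.2)).card = (s.filter p).card * (t.filter q).card := by
  rw [Finset.filter_product, Finset.card_product]

theorem lcnt_node_rec (L R : RBT ℕ) (hn : (RBT.node L R).leaves.Nodup)
    (x y : UTree) {m : ℕ} (hm : (RBT.node x y : UTree).numLeaves = m) :
    lcnt (RBT.node L R) (.node (.leaf ()) (.node x y)) (m + 1) =
      lcnt L (.node (.leaf ()) (.node x y)) (m + 1)
        + lcnt R (.node (.leaf ()) (.node x y)) (m + 1)
        + L.numLeaves * lcnt R (.node x y) m
        + lcnt L (.node x y) m * R.numLeaves := by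
  classical
  set s : UTree := .node (.leaf ()) (.node x y) with hs
  have hm2 : 2 ≤ m := by
    have := RBT.numLeaves_pos x; have := RBT.numLeaves_pos y
    simp only [RBT.numLeaves] at hm; omega
  have hsplit : L.leaves.Nodup ∧ R.leaves.Nodup ∧ Disjoint L.leaves R.leaves := by
    rw [show (RBT.node L R).leaves = L.leaves + R.leaves from rfl, Multiset.nodup_add] at hn
    exact hn
  obtain ⟨hnL, hnR, hdis0⟩ := hsplit
  have hdis : ∀ {a : ℕ}, a ∈ L.leaves → a ∉ R.leaves := Multiset.disjoint_left.1 hdis0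
  set SL := L.leaves.toFinset with hSL
  set SR := R.leaves.toFinset with hSR
  have hdisF : Disjoint SL SR := by
    rw [Finset.disjoint_left]
    intro a haL haR
    exact hdis (Multiset.mem_toFinset.1 haL) (Multiset.mem_toFinset.1 haR)
  have hLnotR : ∀ a ∈ L.leaves, a ∉ SR := fun a ha hmem =>
    hdis ha (Multiset.mem_toFinset.1 hmem)
  have hRnotL : ∀ a ∈ R.leaves, a ∉ SL := fun a ha hmem =>
    hdis (Multiset.mem_toFinset.1 hmem) ha
  have hleaves : (RBT.node L R).leaves.toFinset = SL ∪ SR := by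
    rw [show (RBT.node L R).leaves = L.leaves + R.leaves from rfl, Multiset.toFinset_add]
  -- the four disjoint cases, phrased as products
  set P1 : Finset ℕ → Prop := fun A => Option.map RBT.shape (RBT.restrict A L) = some s with hP1
  set P2 : Finset ℕ → Prop := fun A => Option.map RBT.shape (RBT.restrict A R) = some s with hP2
  set Pm1 : Finset ℕ → Prop :=
    fun A => Option.map RBT.shape (RBT.restrict A L) = some (.node x y) with hPm1
  set Pm2 : Finset ℕ → Prop :=
    fun A => Option.map RBT.shape (RBT.restrict A R) = some (.node x y) with hPm2
  have key : lcnt (RBT.node L R) s (m+1) =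
      ((SL.powerset ×ˢ SR.powerset).filter
        (fun p => (p.1 ∪ p.2).card = m + 1 ∧
          Option.map RBT.shape (RBT.restrict (p.1 ∪ p.2) (RBT.node L R)) = some s)).card := by
    rw [lcnt, hleaves]
    apply Finset.card_nbij' (i := fun A => (A ∩ SL, A ∩ SR)) (j := fun p => p.1 ∪ p.2)
    · intro A hA
      simp only [Finset.mem_coe, Finset.mem_filter, Finset.mem_powersetCard,
        Finset.mem_product, Finset.mem_powerset] at hA ⊢
      obtain ⟨⟨hsub, hcard⟩, hP⟩ := hA
      have hu : (A ∩ SL) ∪ (A ∩ SR) = A := by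
        rw [← Finset.inter_union_distrib_left]
        exact Finset.inter_eq_left.2 hsub
      exact ⟨⟨Finset.inter_subset_right, Finset.inter_subset_right⟩,
        by rw [hu]; exact hcard, by rw [hu]; exact hP⟩
    · intro p hp
      simp only [Finset.mem_coe, Finset.mem_filter, Finset.mem_powersetCard,
        Finset.mem_product, Finset.mem_powerset] at hp ⊢
      obtain ⟨⟨h1, h2⟩, h3, h4⟩ := hp
      exact ⟨⟨Finset.union_subset (h1.trans Finset.subset_union_left)
        (h2.trans Finset.subset_union_right), h3⟩, h4⟩
    · intro A hA
      simp only [Finset.mem_coe, Finset.mem_filter, Finset.mem_powersetCard] at hA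
      show A ∩ SL ∪ A ∩ SR = A
      rw [← Finset.inter_union_distrib_left]
      exact Finset.inter_eq_left.2 hA.1.1
    · intro p hp
      simp only [Finset.mem_coe, Finset.mem_filter, Finset.mem_product,
        Finset.mem_powerset] at hp
      obtain ⟨⟨h1, h2⟩, _⟩ := hp
      have e1 : (p.1 ∪ p.2) ∩ SL = p.1 := by
        rw [Finset.union_inter_distrib_right, Finset.inter_eq_left.2 h1,
          Finset.disjoint_iff_inter_eq_empty.1 (Finset.disjoint_of_subset_left h2 hdisF.symm),
          Finset.union_empty]
      have e2 : (p.1 ∪ p.2) ∩ SR = p.2 := by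
        rw [Finset.union_inter_distrib_right, Finset.inter_eq_left.2 h2,
          Finset.disjoint_iff_inter_eq_empty.1 (Finset.disjoint_of_subset_left h1 hdisF),
          Finset.empty_union]
      exact Prod.ext e1 e2
  have main : ∀ p ∈ SL.powerset ×ˢ SR.powerset,
      (((p.1 ∪ p.2).card = m + 1 ∧
          Option.map RBT.shape (RBT.restrict (p.1 ∪ p.2) (RBT.node L R)) = some s) ↔
        (((P1 p.1 ∧ p.1.card = m + 1) ∧ p.2 = ∅) ∨
          ((p.1 = ∅) ∧ (P2 p.2 ∧ p.2.card = m + 1)) ∨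
          ((p.1.card = 1) ∧ (Pm2 p.2 ∧ p.2.card = m)) ∨
          ((Pm1 p.1 ∧ p.1.card = m) ∧ p.2.card = 1))) := by
    rintro ⟨A1, A2⟩ hp
    simp only [Finset.mem_product, Finset.mem_powerset] at hp
    obtain ⟨h1, h2⟩ := hp
    have hdisA : Disjoint A1 A2 :=
      Finset.disjoint_of_subset_left h1 (Finset.disjoint_of_subset_right h2 hdisF)
    have hres1 : RBT.restrict (A1 ∪ A2) L = RBT.restrict A1 L := by
      apply RBT.restrict_congr
      intro a ha
      simp only [Finset.mem_union]
      constructor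
      · rintro (h | h)
        · exact h
        · exact absurd (h2 h) (hLnotR a ha)
      · exact Or.inl
    have hres2 : RBT.restrict (A1 ∪ A2) R = RBT.restrict A2 R := by
      apply RBT.restrict_congr
      intro a ha
      simp only [Finset.mem_union]
      constructor
      · rintro (h | h)
        · exact absurd (h1 h) (hRnotL a ha)
        · exact h
      · exact Or.inr
    have hcardu : (A1 ∪ A2).card = A1.card + A2.card := Finset.card_union_of_disjoint hdisA
    rcases Finset.eq_empty_or_nonempty A1 with he1 | hne1
    · rcases Finset.eq_empty_or_nonempty A2 with he2 | hne2
      · subst he1; subst he2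
        simp only [Finset.empty_union, Finset.card_empty]
        constructor
        · rintro ⟨h, _⟩; omega
        · rintro (⟨⟨_, h⟩, _⟩ | ⟨_, _, h⟩ | ⟨h, _⟩ | ⟨⟨_, h⟩, _⟩) <;> omega
      · subst he1
        have hn1 : RBT.restrict (∅ : Finset ℕ) L = none :=
          RBT.restrict_eq_none_iff.2 (by simp)
        obtain ⟨r', hr', hcr⟩ := restrict_some_of_subset hnR h2 hne2
        have hrw2 : RBT.restrict (∅ ∪ A2) (RBT.node L R) = some r' := by
          simp only [RBT.restrict]
          rw [hres1, hres2, hn1, hr']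
        rw [hrw2]
        simp only [Finset.empty_union, Option.map_some, Option.some_inj]
        constructor
        · rintro ⟨hc, hsh⟩
          exact Or.inr (Or.inl ⟨by trivial, by rw [hP2]; simp [hr', hsh], hc⟩)
        · rintro (⟨⟨_, hc⟩, _⟩ | ⟨_, hP, hc⟩ | ⟨hc, _⟩ | ⟨⟨hPm, _⟩, _⟩)
          · simp only [Finset.card_empty] at hc; omega
          · rw [hP2] at hP; simp only [hr', Option.map_some, Option.some_inj] at hP
            exact ⟨hc, hP⟩
          · simp only [Finset.card_empty] at hc; omega
          · rw [hPm1] at hPm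
            simp only [hn1, Option.map_none] at hPm
            exact absurd hPm (by simp)
    · rcases Finset.eq_empty_or_nonempty A2 with he2 | hne2
      · subst he2
        have hn2 : RBT.restrict (∅ : Finset ℕ) R = none :=
          RBT.restrict_eq_none_iff.2 (by simp)
        obtain ⟨l', hl', hcl⟩ := restrict_some_of_subset hnL h1 hne1
        have hrw2 : RBT.restrict (A1 ∪ ∅) (RBT.node L R) = some l' := by
          simp only [RBT.restrict]
          rw [hres1, hres2, hn2, hl']
        rw [hrw2]
        simp only [Finset.union_empty, Option.map_some, Option.some_inj]
        constructor
        · rintro ⟨hc, hsh⟩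
          exact Or.inl ⟨⟨by rw [hP1]; simp [hl', hsh], hc⟩, by trivial⟩
        · rintro (⟨⟨hP, hc⟩, _⟩ | ⟨he, _, _⟩ | ⟨_, hPm, _⟩ | ⟨_, hc⟩)
          · rw [hP1] at hP; simp only [hl', Option.map_some, Option.some_inj] at hP
            exact ⟨hc, hP⟩
          · exact absurd he (Finset.nonempty_iff_ne_empty.1 hne1)
          · rw [hPm2] at hPm
            simp only [hn2, Option.map_none] at hPm
            exact absurd hPm (by simp)
          · simp only [Finset.card_empty] at hc; omega
      · obtain ⟨l', hl', hcl⟩ := restrict_some_of_subset hnL h1 hne1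
        obtain ⟨r', hr', hcr⟩ := restrict_some_of_subset hnR h2 hne2
        have hrw2 : RBT.restrict (A1 ∪ A2) (RBT.node L R) = some (RBT.node l' r') := by
          simp only [RBT.restrict]
          rw [hres1, hres2, hl', hr']
        rw [hrw2]
        simp only [Option.map_some, Option.some_inj]
        have hshape : (RBT.node l' r').shape = s ↔
            ((l'.shape = .leaf () ∧ r'.shape = .node x y) ∨
              (l'.shape = .node x y ∧ r'.shape = .leaf ())) := RBT.shape_node_eq_iff
        have hl1 : l'.shape = .leaf () ↔ A1.card = 1 := by
          rw [RBT.shape_eq_leaf_iff, hcl]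
        have hr1 : r'.shape = .leaf () ↔ A2.card = 1 := by
          rw [RBT.shape_eq_leaf_iff, hcr]
        have hlm : l'.shape = .node x y → A1.card = m := by
          intro h
          have := RBT.numLeaves_shape l'
          rw [h, hm] at this
          omega
        have hrm : r'.shape = .node x y → A2.card = m := by
          intro h
          have := RBT.numLeaves_shape r'
          rw [h, hm] at this
          omega
        constructor
        · rintro ⟨hc, hsh⟩
          rcases hshape.1 hsh with ⟨ha, hb⟩ | ⟨ha, hb⟩
          · exact Or.inr (Or.inr (Or.inl ⟨hl1.1 ha, by rw [hPm2]; simp [hr', hb], hrm hb⟩))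
          · exact Or.inr (Or.inr (Or.inr ⟨⟨by rw [hPm1]; simp [hl', ha], hlm ha⟩, hr1.1 hb⟩))
        · rintro (⟨⟨_, _⟩, he⟩ | ⟨he, _, _⟩ | ⟨hc1, hPm, hc2⟩ | ⟨⟨hPm, hc1⟩, hc2⟩)
          · exact absurd he (Finset.nonempty_iff_ne_empty.1 hne2)
          · exact absurd he (Finset.nonempty_iff_ne_empty.1 hne1)
          · rw [hPm2] at hPm
            simp only [hr', Option.map_some, Option.some_inj] at hPm
            exact ⟨by omega, hshape.2 (Or.inl ⟨hl1.2 hc1, hPm⟩)⟩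
          · rw [hPm1] at hPm
            simp only [hl', Option.map_some, Option.some_inj] at hPm
            exact ⟨by omega, hshape.2 (Or.inr ⟨hPm, hr1.2 hc2⟩)⟩
  rw [key, Finset.filter_congr main]
  -- split the disjunction
  have lcnt_eq : ∀ (t : RBT ℕ) (s' : UTree) (k : ℕ), lcnt t s' k
      = (t.leaves.toFinset.powerset.filter
          (fun A => (Option.map RBT.shape (RBT.restrict A t) = some s') ∧ A.card = k)).card := by
    intro t s' k
    rw [lcnt, Finset.powersetCard_eq_filter, Finset.filter_filter]
    congr 1
    apply Finset.filter_congr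
    intro A _
    exact and_comm
  have hcard_empty : ∀ (S : Finset ℕ), (S.powerset.filter (fun A => A = ∅)).card = 1 := by
    intro S
    have : S.powerset.filter (fun A => A = ∅) = {∅} := by
      ext A
      simp only [Finset.mem_filter, Finset.mem_powerset, Finset.mem_singleton]
      constructor
      · rintro ⟨_, h⟩; exact h
      · intro h; subst h; exact ⟨Finset.empty_subset _, rfl⟩
    rw [this]; rfl
  have hcard_one : ∀ (t : RBT ℕ), t.leaves.Nodup →
      ((t.leaves.toFinset.powerset.filter (fun A => A.card = 1)).card = t.numLeaves) := by
    intro t hnd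
    rw [← Finset.powersetCard_eq_filter, Finset.card_powersetCard, Nat.choose_one_right,
      Multiset.toFinset_card_of_nodup hnd, RBT.card_leaves]
  rw [Finset.filter_or, Finset.filter_or, Finset.filter_or]
  rw [Finset.card_union_of_disjoint, Finset.card_union_of_disjoint,
    Finset.card_union_of_disjoint]
  · rw [card_filter_prod SL.powerset SR.powerset (fun A => P1 A ∧ A.card = m + 1)
        (fun A => A = ∅),
      card_filter_prod SL.powerset SR.powerset (fun A => A = ∅)
        (fun A => P2 A ∧ A.card = m + 1),
      card_filter_prod SL.powerset SR.powerset (fun A => A.card = 1)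
        (fun A => Pm2 A ∧ A.card = m),
      card_filter_prod SL.powerset SR.powerset (fun A => Pm1 A ∧ A.card = m)
        (fun A => A.card = 1)]
    rw [hcard_empty, hcard_empty, hcard_one L hnL, hcard_one R hnR]
    simp only [hP1, hP2, hPm1, hPm2]
    rw [hSL, hSR, ← lcnt_eq L s (m+1), ← lcnt_eq R s (m+1),
      ← lcnt_eq R (.node x y) m, ← lcnt_eq L (.node x y) m]
    ring
  · rw [Finset.disjoint_filter]
    rintro p _ ⟨hc1, _, hc2⟩ ⟨⟨_, hc1'⟩, hc2'⟩
    omega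
  · rw [Finset.disjoint_union_right]
    constructor <;> rw [Finset.disjoint_filter]
    · rintro p _ ⟨he, _, _⟩ ⟨hc1, _, _⟩
      rw [he] at hc1; simp only [Finset.card_empty] at hc1; omega
    · rintro p _ ⟨he, _, hc⟩ ⟨⟨_, hc1⟩, hc2⟩
      rw [he] at hc1; simp only [Finset.card_empty] at hc1; omega
  · rw [Finset.disjoint_union_right, Finset.disjoint_union_right]
    refine ⟨?_, ?_, ?_⟩ <;> rw [Finset.disjoint_filter]
    · rintro p _ ⟨_, he⟩ ⟨he1, _, hc⟩
      rw [he] at hc; simp only [Finset.card_empty] at hc; omega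
    · rintro p _ ⟨_, he⟩ ⟨_, _, hc⟩
      rw [he] at hc; simp only [Finset.card_empty] at hc; omega
    · rintro p _ ⟨_, he⟩ ⟨_, hc⟩
      rw [he] at hc; simp only [Finset.card_empty] at hc; omega
end Aux4
section Aux5

open RBT

theorem countRestr_leaf4 : countRestr (.leaf ()) (combU 4) 4 = 0 :=
  countRestr_leaf (by norm_num)

theorem countRestr_leaf5 : countRestr (.leaf ()) (combU 5) 5 = 0 :=
  countRestr_leaf (by norm_num)

theorem c5_leaf : c5 (.leaf ()) = 0 := countRestr_leaf5

theorem nodup_node_label (l r : UTree) :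
    (RBT.node (label l) ((label r).map (· + l.numLeaves))).leaves.Nodup := by
  rw [← label_node, leaves_label]; exact Multiset.nodup_range _

theorem c5_node (l r : UTree) :
    c5 (RBT.node l r) = c5 l + c5 r
      + l.numLeaves * countRestr r (combU 4) 4 + countRestr l (combU 4) 4 * r.numLeaves := by
  have hinj : Function.Injective (· + l.numLeaves) := add_left_injective _
  have h := lcnt_node_rec (label l) ((label r).map (· + l.numLeaves)) (nodup_node_label l r)
      (.leaf ()) (combU 3) (m := 4) rfl
  have e5 : ∀ u : UTree,
      lcnt (label u) (RBT.node (RBT.leaf ()) (RBT.node (RBT.leaf ()) (combU 3))) (4+1)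
        = c5 u := by
    intro u
    rw [c5, countRestr_eq_lcnt, RBT.canon_comb]
    rfl
  have e4 : ∀ u : UTree,
      lcnt (label u) (RBT.node (RBT.leaf ()) (combU 3)) 4 = countRestr u (combU 4) 4 := by
    intro u
    rw [countRestr_eq_lcnt, RBT.canon_comb]
    rfl
  rw [show c5 (RBT.node l r)
      = lcnt (label (RBT.node l r)) (RBT.node (RBT.leaf ())
          (RBT.node (RBT.leaf ()) (combU 3))) (4+1) from (e5 _).symm]
  rw [label_node, h, lcnt_map hinj, lcnt_map hinj, RBT.numLeaves_map,
    numLeaves_label, numLeaves_label, e5 l, e5 r, e4 l, e4 r]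

theorem c4_node (l r : UTree) :
    countRestr (RBT.node l r) (combU 4) 4 = countRestr l (combU 4) 4 + countRestr r (combU 4) 4
      + l.numLeaves * r.numLeaves.choose 3 + l.numLeaves.choose 3 * r.numLeaves := by
  have hinj : Function.Injective (· + l.numLeaves) := add_left_injective _
  have h := lcnt_node_rec (label l) ((label r).map (· + l.numLeaves)) (nodup_node_label l r)
      (.leaf ()) (combU 2) (m := 3) rfl
  have e4 : ∀ u : UTree,
      lcnt (label u) (RBT.node (RBT.leaf ()) (RBT.node (RBT.leaf ()) (combU 2))) (3+1)
        = countRestr u (combU 4) 4 := by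
    intro u
    rw [countRestr_eq_lcnt, RBT.canon_comb]
    rfl
  have e3 : ∀ u : UTree,
      lcnt (label u) (RBT.node (RBT.leaf ()) (combU 2)) 3 = u.numLeaves.choose 3 := by
    intro u
    have h3 := lcnt_comb3 (nodup_leaves_label u)
    rw [numLeaves_label] at h3
    exact h3
  have e3' : lcnt ((label r).map (· + l.numLeaves)) (RBT.node (RBT.leaf ()) (combU 2)) 3
      = r.numLeaves.choose 3 := by
    rw [lcnt_map hinj]; exact e3 r
  rw [show countRestr (RBT.node l r) (combU 4) 4
      = lcnt (label (RBT.node l r)) (RBT.node (RBT.leaf ())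
          (RBT.node (RBT.leaf ()) (combU 2))) (3+1) from (e4 _).symm]
  rw [label_node, h, lcnt_map hinj, RBT.numLeaves_map,
    numLeaves_label, numLeaves_label, e4 l, e4 r, e3 l, e3']

theorem choose_add_three (a b : ℕ) :
    (a + b).choose 3 = a.choose 3 + a.choose 2 * b + a * b.choose 2 + b.choose 3 := by
  rw [Nat.add_choose_eq, Finset.Nat.sum_antidiagonal_eq_sum_range_succ_mk]
  simp [Finset.sum_range_succ, Nat.choose_one_right]
  ring

theorem base4 (t1 t2 : UTree) :
    countRestr (RBT.node (RBT.node t1 t2) (RBT.leaf ())) (combU 4) 4 =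
      countRestr (RBT.node t1 (RBT.node t2 (RBT.leaf ()))) (combU 4) 4
        + t1.numLeaves.choose 2 * t2.numLeaves := by
  simp only [c4_node, countRestr_leaf4, RBT.numLeaves]
  rw [choose_add_three t1.numLeaves t2.numLeaves, choose_add_three t2.numLeaves 1]
  simp only [show (1:ℕ).choose 3 = 0 from rfl, show (1:ℕ).choose 2 = 0 from rfl,
    Nat.choose_one_right]
  ring

theorem base5 (t1 t2 : UTree) :
    c5 (RBT.node (RBT.node t1 t2) (RBT.leaf ())) =
      c5 (RBT.node t1 (RBT.node t2 (RBT.leaf ()))) + t1.numLeaves.choose 3 * t2.numLeaves := by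
  simp only [c5_node, c4_node, countRestr_leaf4, c5_leaf, RBT.numLeaves]
  simp only [show (1:ℕ).choose 3 = 0 from rfl]
  ring

def ctxN : Ctx → ℕ
  | .hole => 0
  | .nodeL c r => ctxN c + r.numLeaves
  | .nodeR l c => l.numLeaves + ctxN c

theorem numLeaves_fill (C : Ctx) (X : UTree) : (C.fill X).numLeaves = ctxN C + X.numLeaves := by
  induction C with
  | hole => simp [Ctx.fill, ctxN]
  | nodeL c r ih => simp only [Ctx.fill, ctxN, RBT.numLeaves, ih]; omega
  | nodeR l c ih => simp only [Ctx.fill, ctxN, RBT.numLeaves, ih]; omega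

theorem ctx_main (t1 t2 : UTree) (C : Ctx) :
    (countRestr (C.fill (RBT.node (RBT.node t1 t2) (RBT.leaf ()))) (combU 4) 4 =
        countRestr (C.fill (RBT.node t1 (RBT.node t2 (RBT.leaf ())))) (combU 4) 4
          + t1.numLeaves.choose 2 * t2.numLeaves)
      ∧ (c5 (C.fill (RBT.node (RBT.node t1 t2) (RBT.leaf ()))) =
          c5 (C.fill (RBT.node t1 (RBT.node t2 (RBT.leaf ()))))
            + t1.numLeaves.choose 3 * t2.numLeaves
            + t1.numLeaves.choose 2 * t2.numLeaves * ctxN C) := by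
  induction C with
  | hole =>
    refine ⟨base4 t1 t2, ?_⟩
    simp only [Ctx.fill, ctxN, Nat.mul_zero, Nat.add_zero]
    exact base5 t1 t2
  | nodeL c r ih =>
    obtain ⟨ih4, ih5⟩ := ih
    have hn : (c.fill (RBT.node (RBT.node t1 t2) (RBT.leaf ()))).numLeaves
        = (c.fill (RBT.node t1 (RBT.node t2 (RBT.leaf ())))).numLeaves := by
      rw [numLeaves_fill, numLeaves_fill]
      simp only [RBT.numLeaves]
      omega
    constructor
    · simp only [Ctx.fill]
      rw [c4_node, c4_node, ih4, hn]
      ring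
    · simp only [Ctx.fill, ctxN]
      rw [c5_node, c5_node, ih5, ih4, hn]
      ring
  | nodeR l c ih =>
    obtain ⟨ih4, ih5⟩ := ih
    have hn : (c.fill (RBT.node (RBT.node t1 t2) (RBT.leaf ()))).numLeaves
        = (c.fill (RBT.node t1 (RBT.node t2 (RBT.leaf ())))).numLeaves := by
      rw [numLeaves_fill, numLeaves_fill]
      simp only [RBT.numLeaves]
      omega
    constructor
    · simp only [Ctx.fill]
      rw [c4_node, c4_node, ih4, hn]
      ring
    · simp only [Ctx.fill, ctxN]
      rw [c5_node, c5_node, ih5, ih4, hn]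
      ring

end Aux5

/-- Let `T` have an internal vertex `z` with children an
internal vertex `a` (with child subtrees `T₁, T₂`, `n₁ ≥ n₂`, `n₁ + n₂ ≥ 3`) and
a leaf `l`, and let `T'` be obtained by replacing the subtree below `z` with the
shape whose root has children `T₁` and a vertex with children `T₂` and `l`.
Then `c₅(T) ≥ c₅(T')`, strictly if `n ≥ 7`; moreover for the subtrees below `z`,
`c₅(T_z) − c₅(T'_z) = C(n₁, 3)·n₂`. -/
theorem c5_switch_leaf (C : Ctx) (t1 t2 : UTree)
    (h12 : t2.numLeaves ≤ t1.numLeaves) (h3 : 3 ≤ t1.numLeaves + t2.numLeaves) :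
    c5 (C.fill (RBT.node t1 (RBT.node t2 (RBT.leaf ())))) ≤
        c5 (C.fill (RBT.node (RBT.node t1 t2) (RBT.leaf ()))) ∧
      (7 ≤ (C.fill (RBT.node (RBT.node t1 t2) (RBT.leaf ()))).numLeaves →
        c5 (C.fill (RBT.node t1 (RBT.node t2 (RBT.leaf ())))) <
          c5 (C.fill (RBT.node (RBT.node t1 t2) (RBT.leaf ())))) ∧
      c5 (RBT.node (RBT.node t1 t2) (RBT.leaf ())) =
        c5 (RBT.node t1 (RBT.node t2 (RBT.leaf ()))) +
          Nat.choose t1.numLeaves 3 * t2.numLeaves := by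
  obtain ⟨h4, h5⟩ := ctx_main t1 t2 C
  have hn2 : 0 < t2.numLeaves := RBT.numLeaves_pos t2
  have hn1 : 2 ≤ t1.numLeaves := by omega
  refine ⟨?_, ?_, base5 t1 t2⟩
  · rw [h5, Nat.add_assoc]
    exact Nat.le_add_right _ _
  · intro h7
    rw [numLeaves_fill] at h7
    simp only [RBT.numLeaves] at h7
    have hpos : 0 < t1.numLeaves.choose 3 * t2.numLeaves
        + t1.numLeaves.choose 2 * t2.numLeaves * ctxN C := by
      rcases Nat.eq_zero_or_pos (ctxN C) with h0 | h0
      · have h13 : 3 ≤ t1.numLeaves := by omega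
        exact Nat.add_pos_left (Nat.mul_pos (Nat.choose_pos h13) hn2) _
      · exact Nat.add_pos_right _ (Nat.mul_pos (Nat.mul_pos (Nat.choose_pos hn1) hn2) h0)
    rw [h5, Nat.add_assoc]
    exact Nat.lt_add_of_pos_right hpos
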